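/- Let ρ be a positive semidefinite operator on a finite-dimensional Hilbert space H whose support decomposes as an orthogonal direct sum H₁ ⊕ H₂, with orthogonal projections P₁, P₂ onto H₁, H₂. Let U : H ⊗ span{u} → H ⊗ E be an isometry satisfying Tr_E[U(ρ ⊗ |u⟩⟨u|)U†] = ρ and (P₂ ⊗ 1_E) U (P₁ ⊗ |u⟩⟨u|) = 0. Then also (P₁ ⊗ 1_E) U (P₂ ⊗ |u⟩⟨u|) = 0; that is, if U does not transfer H₁ into H₂, it does not transfer H₂ into H₁ either. -/

import Mathlib

open Matrix BigOperators Kronecker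
open scoped ComplexOrder

noncomputable section

/-- Partial trace over the ancilla factor `e`. -/
def ptrE {n e : Type*} [Fintype n] [Fintype e]
    (M : Matrix (n × e) (n × e) ℂ) : Matrix n n ℂ :=
  Matrix.of fun i j => ∑ k, M (i, k) (j, k)

/-- trace of `(P ⊗ 1) * M` equals trace of `P * ptrE M`. -/
lemma trace_kron_one_mul {n e : Type*} [Fintype n] [DecidableEq n] [Fintype e] [DecidableEq e]
    (P : Matrix n n ℂ) (M : Matrix (n × e) (n × e) ℂ) :
    ((P ⊗ₖ (1 : Matrix e e ℂ)) * M).trace = (P * ptrE M).trace := by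
  simp only [Matrix.trace, Matrix.diag, Matrix.mul_apply, ptrE, Matrix.of_apply,
    Matrix.kroneckerMap_apply, Matrix.one_apply, Fintype.sum_prod_type, mul_ite, mul_one,
    mul_zero, ite_mul, zero_mul, Finset.sum_ite_eq, Finset.sum_ite_eq', Finset.mem_univ,
    if_true, Finset.mul_sum]
  exact Finset.sum_congr rfl fun i _ => Finset.sum_comm

/-- a matrix with `trace (Z * Zᴴ) = 0` is zero. -/
lemma eq_zero_of_trace_mul_conjTranspose {m n : Type*} [Fintype m] [Fintype n]
    (Z : Matrix m n ℂ) (h : (Z * Zᴴ).trace = 0) : Z = 0 := by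
  have h' : ∑ i, ∑ j, (Complex.normSq (Z i j) : ℂ) = 0 := by
    simpa [Matrix.trace, Matrix.diag, Matrix.mul_apply, Matrix.conjTranspose_apply,
      Complex.mul_conj] using h
  have h'' : ∑ i, ∑ j, Complex.normSq (Z i j) = 0 := by exact_mod_cast h'
  ext i j
  have hnn : ∀ i ∈ Finset.univ, (0:ℝ) ≤ ∑ j, Complex.normSq (Z i j) :=
    fun i _ => Finset.sum_nonneg fun j _ => Complex.normSq_nonneg _
  have hi := (Finset.sum_eq_zero_iff_of_nonneg hnn).mp h'' i (Finset.mem_univ i)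
  have hj := (Finset.sum_eq_zero_iff_of_nonneg
    (fun j _ => Complex.normSq_nonneg (Z i j))).mp hi j (Finset.mem_univ j)
  simpa using Complex.normSq_eq_zero.mp hj

/-- kernel transfer: if `ker A ⊆ ker B` and `C * A = 0` then `C * B = 0`. -/
lemma mul_right_eq_zero_of_ker {m n : Type*} [Fintype m] [Fintype n]
    {A B : Matrix n n ℂ} (hAh : Aᴴ = A) (hBh : Bᴴ = B)
    (h : ∀ x : n → ℂ, A.mulVec x = 0 → B.mulVec x = 0)
    {C : Matrix m n ℂ} (hCA : C * A = 0) : C * B = 0 := by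
  have hAC : A * Cᴴ = 0 := by
    have := congrArg Matrix.conjTranspose hCA
    simpa [Matrix.conjTranspose_mul, hAh] using this
  have hBC : B * Cᴴ = 0 := by
    ext i j
    have hcol : A.mulVec (fun k => Cᴴ k j) = 0 := by
      funext i'
      have := congrFun (congrFun hAC i') j
      simpa [Matrix.mul_apply, Matrix.mulVec, dotProduct] using this
    have := congrFun (h _ hcol) i
    simpa [Matrix.mul_apply, Matrix.mulVec, dotProduct] using this
  have := congrArg Matrix.conjTranspose hBC
  simpa [Matrix.conjTranspose_mul, hBh] using this

/-- Lemma 2: let `ρ ≥ 0` have support `H₁ ⊕ H₂` (projections `P₁, P₂`),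
and let the isometry `V` preserve `ρ` and not transfer `H₁` into `H₂`
(`(P₂ ⊗ 1_E) U (P₁ ⊗ Σ_E) = 0`). Then it does not transfer `H₂` into `H₁` either. -/
theorem stmt2 {n e : Type*} [Fintype n] [DecidableEq n] [Fintype e] [DecidableEq e]
    (ρ : Matrix n n ℂ) (hρ : ρ.PosSemidef)
    (P₁ P₂ : Matrix n n ℂ)
    (h1h : P₁.IsHermitian) (h1p : P₁ * P₁ = P₁)
    (h2h : P₂.IsHermitian) (h2p : P₂ * P₂ = P₂)
    (horth : P₁ * P₂ = 0)
    (hsupp : (P₁ + P₂) * ρ = ρ)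
    (hker : ∀ x : n → ℂ, ρ.mulVec x = 0 → (P₁ + P₂).mulVec x = 0)
    (V : Matrix (n × e) n ℂ) (hiso : Vᴴ * V = 1)
    (hpre : ptrE (V * ρ * Vᴴ) = ρ)
    (hno12 : (P₂ ⊗ₖ (1 : Matrix e e ℂ)) * V * P₁ = 0) :
    (P₁ ⊗ₖ (1 : Matrix e e ℂ)) * V * P₂ = 0 := by
  have horth' : P₂ * P₁ = 0 := by
    have := congrArg Matrix.conjTranspose horth
    simpa [Matrix.conjTranspose_mul, h1h.eq, h2h.eq] using this
  have hQh : (P₁ + P₂)ᴴ = P₁ + P₂ := by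
    simp [Matrix.conjTranspose_add, h1h.eq, h2h.eq]
  have hρh : ρᴴ = ρ := hρ.1
  obtain ⟨s, hss, hsh⟩ : ∃ s : Matrix n n ℂ, s * s = ρ ∧ sᴴ = s := by
    open MatrixOrder in
    exact ⟨CFC.sqrt ρ, CFC.sqrt_mul_sqrt_self ρ hρ.nonneg, (CFC.sqrt_nonneg ρ).posSemidef.1⟩
  -- (P₁ + P₂) * s = s
  have hQs : (P₁ + P₂) * s = s := by
    have h0 : (1 - (P₁ + P₂)) * ρ = 0 := by rw [sub_mul, one_mul, hsupp, sub_self]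
    have h1 : ((1 - (P₁ + P₂)) * s) * ((1 - (P₁ + P₂)) * s)ᴴ = 0 := by
      rw [Matrix.conjTranspose_mul, hsh, show (1 - (P₁ + P₂)) * s * (s * (1 - (P₁ + P₂))ᴴ)
          = ((1 - (P₁ + P₂)) * (s * s)) * (1 - (P₁ + P₂))ᴴ by simp only [Matrix.mul_assoc],
        hss, h0, zero_mul]
    have h2 : (1 - (P₁ + P₂)) * s = 0 := Matrix.self_mul_conjTranspose_eq_zero.mp h1
    have h3 : s - (P₁ + P₂) * s = 0 := by rw [← h2, sub_mul, one_mul]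
    exact (sub_eq_zero.mp h3).symm
  set B : Matrix (n × e) (n × e) ℂ := P₂ ⊗ₖ (1 : Matrix e e ℂ) with hB
  have hBh : Bᴴ = B := by
    ext ⟨i, k⟩ ⟨j, l⟩
    simp only [hB, Matrix.conjTranspose_apply, Matrix.kroneckerMap_apply, Matrix.one_apply,
      star_mul']
    by_cases hkl : k = l
    · subst hkl
      simp [← Matrix.conjTranspose_apply, h2h.eq]
    · simp [hkl, Ne.symm hkl]
  have hB2 : B * B = B := by
    rw [hB, ← mul_kronecker_mul, h2p, one_mul]
  -- Y = V * P₂ * s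
  set Y : Matrix (n × e) n ℂ := V * P₂ * s with hY
  have hYY : Y * Yᴴ = V * (P₂ * ρ * P₂) * Vᴴ := by
    rw [hY, Matrix.conjTranspose_mul, Matrix.conjTranspose_mul, hsh, h2h.eq, ← hss]
    simp only [Matrix.mul_assoc]
  have htrY : (Y * Yᴴ).trace = (P₂ * ρ).trace := by
    rw [hYY, Matrix.trace_mul_comm (V * (P₂ * ρ * P₂)) Vᴴ,
      show Vᴴ * (V * (P₂ * ρ * P₂)) = (Vᴴ * V) * (P₂ * ρ * P₂) by simp only [Matrix.mul_assoc], hiso, one_mul,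
      Matrix.trace_mul_comm (P₂ * ρ) P₂,
      show P₂ * (P₂ * ρ) = (P₂ * P₂) * ρ by simp only [Matrix.mul_assoc], h2p]
  -- B * V * s = B * Y
  have hBVs : B * V * s = B * Y := by
    have e1 : B * V * s = B * V * ((P₁ + P₂) * s) := by rw [hQs]
    have e2 : B * V * ((P₁ + P₂) * s) = (B * V * P₁) * s + (B * V * P₂) * s := by
      simp only [add_mul, Matrix.mul_assoc]
      rw [Matrix.mul_add, Matrix.mul_add]
    rw [e1, e2, hno12, Matrix.zero_mul, zero_add, hY]
    simp only [Matrix.mul_assoc]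
  -- trace of B (VρVᴴ) B
  have e3 : (B * Y) * (B * Y)ᴴ = B * (V * ρ * Vᴴ) * B := by
    rw [← hBVs, Matrix.conjTranspose_mul, Matrix.conjTranspose_mul, hsh, hBh, ← hss]
    simp only [Matrix.mul_assoc]
  have htrB : ((B * Y) * (B * Y)ᴴ).trace = (P₂ * ρ).trace := by
    rw [e3]
    rw [Matrix.trace_mul_comm (B * (V * ρ * Vᴴ)) B,
      show B * (B * (V * ρ * Vᴴ)) = (B * B) * (V * ρ * Vᴴ) by simp only [Matrix.mul_assoc], hB2]
    have := trace_kron_one_mul P₂ (V * ρ * Vᴴ)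
    rw [← hB] at this
    rw [this, hpre]
  -- the complement part has zero trace
  have t1 : ((B * Y) * (B * Y)ᴴ).trace = ((B * Y) * Yᴴ).trace := by
    rw [Matrix.conjTranspose_mul, hBh,
      show (B * Y) * (Yᴴ * B) = ((B * Y) * Yᴴ) * B by simp only [Matrix.mul_assoc],
      Matrix.trace_mul_comm ((B * Y) * Yᴴ) B,
      show B * (B * Y * Yᴴ) = (B * B) * (Y * Yᴴ) by simp only [Matrix.mul_assoc], hB2]
    simp only [hY, Matrix.mul_assoc]
  have t2 : (Y * (B * Y)ᴴ).trace = ((B * Y) * Yᴴ).trace := by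
    rw [Matrix.conjTranspose_mul, hBh,
      show Y * (Yᴴ * B) = (Y * Yᴴ) * B by simp only [Matrix.mul_assoc],
      Matrix.trace_mul_comm (Y * Yᴴ) B,
      show B * (Y * Yᴴ) = (B * Y) * Yᴴ by simp only [Matrix.mul_assoc]]
  have htrZ : ((Y - B * Y) * (Y - B * Y)ᴴ).trace = 0 := by
    have expand : (Y - B * Y) * (Y - B * Y)ᴴ
        = Y * Yᴴ - Y * (B * Y)ᴴ - (B * Y) * Yᴴ + (B * Y) * (B * Y)ᴴ := by
      rw [Matrix.conjTranspose_sub]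
      simp only [Matrix.sub_mul, Matrix.mul_sub]
      abel
    rw [expand, Matrix.trace_add, Matrix.trace_sub, Matrix.trace_sub,
      htrY, t2, htrB, ← t1, htrB]
    ring
  have hZ : Y - B * Y = 0 := eq_zero_of_trace_mul_conjTranspose _ htrZ
  have hYB : Y = B * Y := sub_eq_zero.mp hZ
  have hP1B : (P₁ ⊗ₖ (1 : Matrix e e ℂ)) * B = 0 := by
    rw [hB, ← mul_kronecker_mul, horth, Matrix.zero_kronecker]
  have hMs : ((P₁ ⊗ₖ (1 : Matrix e e ℂ)) * V * P₂) * s = 0 := by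
    have h5 : (P₁ ⊗ₖ (1 : Matrix e e ℂ)) * Y = 0 := by
      rw [hYB, show (P₁ ⊗ₖ (1 : Matrix e e ℂ)) * (B * Y)
          = ((P₁ ⊗ₖ (1 : Matrix e e ℂ)) * B) * Y by simp only [Matrix.mul_assoc], hP1B, Matrix.zero_mul]
    rw [hY] at h5
    rw [show ((P₁ ⊗ₖ (1 : Matrix e e ℂ)) * V * P₂) * s
        = (P₁ ⊗ₖ (1 : Matrix e e ℂ)) * (V * P₂ * s) by simp only [Matrix.mul_assoc], h5]
  have hMρ : ((P₁ ⊗ₖ (1 : Matrix e e ℂ)) * V * P₂) * ρ = 0 := by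
    rw [← hss, show ((P₁ ⊗ₖ (1 : Matrix e e ℂ)) * V * P₂) * (s * s)
        = (((P₁ ⊗ₖ (1 : Matrix e e ℂ)) * V * P₂) * s) * s by simp only [Matrix.mul_assoc], hMs, Matrix.zero_mul]
  have hMQ : ((P₁ ⊗ₖ (1 : Matrix e e ℂ)) * V * P₂) * (P₁ + P₂) = 0 :=
    mul_right_eq_zero_of_ker hρh hQh hker hMρ
  have hP2Q : P₂ * (P₁ + P₂) = P₂ := by rw [mul_add, horth', h2p, zero_add]
  calc (P₁ ⊗ₖ (1 : Matrix e e ℂ)) * V * P₂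
      = (P₁ ⊗ₖ (1 : Matrix e e ℂ)) * V * (P₂ * (P₁ + P₂)) := by rw [hP2Q]
    _ = ((P₁ ⊗ₖ (1 : Matrix e e ℂ)) * V * P₂) * (P₁ + P₂) := by simp only [Matrix.mul_assoc]
    _ = 0 := hMQ
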